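/- The bicomplex Julia set J_{2,c} = ∂K_{2,c} for c = c1 + c2·i2 equals (J_{c1-c2·i1} ×_e K_{c1+c2·i1}) ∪ (K_{c1-c2·i1} ×_e J_{c1+c2·i1}), where J_a = ∂K_a are the complex Julia sets; in particular J_{c1-c2·i1} ×_e J_{c1+c2·i1} ⊆ J_{2,c}. -/

import Mathlib

/- We model the bicomplex numbers `BC` via their idempotent representation:
a bicomplex number `w = w₁·e₁ + w₂·e₂` is identified with the pair `(w₁, w₂) : ℂ × ℂ`,
which is a ring isomorphism onto the product ring `ℂ × ℂ`. -/
noncomputable section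

abbrev BC : Type := ℂ × ℂ

/-- The canonical embedding of `ℂ(i₁)` into the bicomplex numbers. -/
def BC.toBC (z : ℂ) : BC := (z, z)

/-- The imaginary unit `i₁`. -/
def BC.i1 : BC := (Complex.I, Complex.I)

/-- The imaginary unit `i₂`. -/
def BC.i2 : BC := (-Complex.I, Complex.I)

/-- The hyperbolic unit `j = i₁·i₂`. -/
def BC.j : BC := BC.i1 * BC.i2

/-- The idempotent `e₁ = (1 + j)/2`. -/
def BC.e1 : BC := ((1 : BC) + BC.j) / 2

/-- The idempotent `e₂ = (1 - j)/2`. -/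
def BC.e2 : BC := ((1 : BC) - BC.j) / 2

/-- The bicomplex number `z₁ + z₂·i₂`. -/
def BC.mk (z1 z2 : ℂ) : BC := BC.toBC z1 + BC.toBC z2 * BC.i2

/-- The real modulus of a bicomplex number, expressed through its idempotent
components: `‖w₁·e₁ + w₂·e₂‖ = √((|w₁|² + |w₂|²)/2)`. -/
def BC.norm (w : BC) : ℝ := Real.sqrt ((‖w.1‖ ^ 2 + ‖w.2‖ ^ 2) / 2)

/-- The idempotent cartesian product `X₁ ×ₑ X₂`. -/
def BC.cartE (X1 X2 : Set ℂ) : Set BC :=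
  {w : BC | ∃ w1 ∈ X1, ∃ w2 ∈ X2, w = BC.toBC w1 * BC.e1 + BC.toBC w2 * BC.e2}

/-- The complex filled-in Julia set of `z ↦ z² + a`. -/
def Kc (a : ℂ) : Set ℂ :=
  {z : ℂ | ∃ M : ℝ, ∀ n : ℕ, ‖(fun z : ℂ => z ^ 2 + a)^[n] z‖ ≤ M}

/-- The bicomplex filled-in Julia set of `w ↦ w² + c`. -/
def K2 (c : BC) : Set BC :=
  {w : BC | ∃ M : ℝ, ∀ n : ℕ, BC.norm ((fun w : BC => w ^ 2 + c)^[n] w) ≤ M}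


lemma cartE_eq (X1 X2 : Set ℂ) : BC.cartE X1 X2 = X1 ×ˢ X2 := by
  have he : ∀ w1 w2 : ℂ, BC.toBC w1 * BC.e1 + BC.toBC w2 * BC.e2 = (w1, w2) := by
    intro w1 w2
    simp only [BC.toBC, BC.e1, BC.e2, BC.j, BC.i1, BC.i2, Prod.ext_iff, Prod.fst_add,
      Prod.snd_add, Prod.fst_mul, Prod.snd_mul, Prod.fst_div, Prod.snd_div, Prod.fst_one,
      Prod.snd_one, Prod.fst_sub, Prod.snd_sub]
    constructor
    · have : Complex.I * -Complex.I = 1 := by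
        rw [mul_neg, Complex.I_mul_I]; ring
      rw [this]; norm_num
    · rw [Complex.I_mul_I]; norm_num
  ext ⟨x, y⟩
  simp only [BC.cartE, Set.mem_setOf_eq, Set.mem_prod, he, Prod.mk.injEq]
  constructor
  · rintro ⟨w1, h1, w2, h2, rfl, rfl⟩; exact ⟨h1, h2⟩
  · rintro ⟨h1, h2⟩; exact ⟨x, h1, y, h2, rfl, rfl⟩

lemma iter_prod (c : BC) (w : BC) (n : ℕ) :
    (fun w : BC => w ^ 2 + c)^[n] w =
      ((fun z : ℂ => z ^ 2 + c.1)^[n] w.1, (fun z : ℂ => z ^ 2 + c.2)^[n] w.2) := by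
  induction n with
  | zero => simp
  | succ n ih =>
      rw [Function.iterate_succ_apply', Function.iterate_succ_apply',
        Function.iterate_succ_apply', ih]
      rfl

lemma fst_le_norm (w : BC) : ‖w.1‖ ≤ Real.sqrt 2 * BC.norm w := by
  unfold BC.norm
  rw [← Real.sqrt_mul (by norm_num : (0:ℝ) ≤ 2)]
  have h : (2:ℝ) * ((‖w.1‖ ^ 2 + ‖w.2‖ ^ 2) / 2) = ‖w.1‖ ^ 2 + ‖w.2‖ ^ 2 := by ring
  rw [h]
  calc ‖w.1‖ = Real.sqrt (‖w.1‖ ^ 2) := (Real.sqrt_sq (norm_nonneg _)).symm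
    _ ≤ Real.sqrt (‖w.1‖ ^ 2 + ‖w.2‖ ^ 2) :=
        Real.sqrt_le_sqrt (by nlinarith [sq_nonneg ‖w.2‖])

lemma snd_le_norm (w : BC) : ‖w.2‖ ≤ Real.sqrt 2 * BC.norm w := by
  unfold BC.norm
  rw [← Real.sqrt_mul (by norm_num : (0:ℝ) ≤ 2)]
  have h : (2:ℝ) * ((‖w.1‖ ^ 2 + ‖w.2‖ ^ 2) / 2) = ‖w.1‖ ^ 2 + ‖w.2‖ ^ 2 := by ring
  rw [h]
  calc ‖w.2‖ = Real.sqrt (‖w.2‖ ^ 2) := (Real.sqrt_sq (norm_nonneg _)).symm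
    _ ≤ Real.sqrt (‖w.1‖ ^ 2 + ‖w.2‖ ^ 2) :=
        Real.sqrt_le_sqrt (by nlinarith [sq_nonneg ‖w.1‖])

lemma norm_le_of_le (w : BC) {M1 M2 : ℝ} (h1 : ‖w.1‖ ≤ M1) (h2 : ‖w.2‖ ≤ M2) :
    BC.norm w ≤ Real.sqrt (M1 ^ 2 + M2 ^ 2) := by
  apply Real.sqrt_le_sqrt
  nlinarith [norm_nonneg w.1, norm_nonneg w.2]

lemma mem_K2_iff (c : BC) (w : BC) : w ∈ K2 c ↔ w.1 ∈ Kc c.1 ∧ w.2 ∈ Kc c.2 := by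
  simp only [K2, Kc, Set.mem_setOf_eq, iter_prod]
  constructor
  · rintro ⟨M, hM⟩
    refine ⟨⟨Real.sqrt 2 * M, fun n => ?_⟩, ⟨Real.sqrt 2 * M, fun n => ?_⟩⟩
    · have h1 := fst_le_norm
        ((fun z : ℂ => z ^ 2 + c.1)^[n] w.1, (fun z : ℂ => z ^ 2 + c.2)^[n] w.2)
      exact le_trans h1 (mul_le_mul_of_nonneg_left (hM n) (Real.sqrt_nonneg 2))
    · have h1 := snd_le_norm
        ((fun z : ℂ => z ^ 2 + c.1)^[n] w.1, (fun z : ℂ => z ^ 2 + c.2)^[n] w.2)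
      exact le_trans h1 (mul_le_mul_of_nonneg_left (hM n) (Real.sqrt_nonneg 2))
  · rintro ⟨⟨M1, hM1⟩, ⟨M2, hM2⟩⟩
    exact ⟨Real.sqrt (M1 ^ 2 + M2 ^ 2), fun n =>
      norm_le_of_le ((fun z : ℂ => z ^ 2 + c.1)^[n] w.1, (fun z : ℂ => z ^ 2 + c.2)^[n] w.2)
        (hM1 n) (hM2 n)⟩

lemma K2_eq (c : BC) : K2 c = (Kc c.1) ×ˢ (Kc c.2) := by
  ext w
  rw [Set.mem_prod]
  exact mem_K2_iff c w

lemma Kc_bound (a : ℂ) {z : ℂ} (hz : z ∈ Kc a) (n : ℕ) :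
    ‖(fun z : ℂ => z ^ 2 + a)^[n] z‖ ≤ ‖a‖ + 3 := by
  by_contra h
  push_neg at h
  obtain ⟨M, hM⟩ := hz
  set f := fun z : ℂ => z ^ 2 + a with hf
  have key : ∀ y : ℂ, ‖a‖ + 3 < ‖y‖ → ‖a‖ + 3 < ‖f y‖ ∧ 2 * ‖y‖ ≤ ‖f y‖ := by
    intro y hy
    have h1 : ‖y ^ 2‖ ≤ ‖f y‖ + ‖a‖ := by
      have := norm_sub_le (y ^ 2 + a) a
      simpa [hf] using this
    have hy2 : ‖y ^ 2‖ = ‖y‖ ^ 2 := norm_pow y 2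
    constructor <;> nlinarith [norm_nonneg a, norm_nonneg y, norm_nonneg (f y)]
  have grow : ∀ k : ℕ, ‖a‖ + 3 < ‖f^[n + k] z‖ ∧
      2 ^ k * ‖f^[n] z‖ ≤ ‖f^[n + k] z‖ := by
    intro k
    induction k with
    | zero => simpa using h
    | succ k ih =>
        have hkey := key _ ih.1
        have heq : f^[n + (k + 1)] z = f (f^[n + k] z) := by
          rw [← Nat.add_assoc, Function.iterate_succ_apply']
        constructor
        · rw [heq]; exact hkey.1
        · rw [heq, pow_succ]
          calc 2 ^ k * 2 * ‖f^[n] z‖ = 2 * (2 ^ k * ‖f^[n] z‖) := by ring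
            _ ≤ 2 * ‖f^[n + k] z‖ := by linarith [ih.2]
            _ ≤ ‖f (f^[n + k] z)‖ := hkey.2
  obtain ⟨k, hk⟩ := pow_unbounded_of_one_lt M (by norm_num : (1:ℝ) < 2)
  have hx1 : (1:ℝ) ≤ ‖f^[n] z‖ := by
    have := norm_nonneg a
    linarith
  have h2k : (0:ℝ) < 2 ^ k := pow_pos (by norm_num) k
  have : (2:ℝ) ^ k ≤ 2 ^ k * ‖f^[n] z‖ := by nlinarith
  have := hM (n + k)
  linarith [(grow k).2]

lemma Kc_closed (a : ℂ) : IsClosed (Kc a) := by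
  have heq : Kc a = ⋂ n : ℕ, {z : ℂ | ‖(fun z : ℂ => z ^ 2 + a)^[n] z‖ ≤ ‖a‖ + 3} := by
    ext z
    simp only [Set.mem_iInter, Set.mem_setOf_eq]
    exact ⟨fun hz n => Kc_bound a hz n, fun h => ⟨‖a‖ + 3, h⟩⟩
  rw [heq]
  refine isClosed_iInter fun n => isClosed_le ?_ continuous_const
  exact (Continuous.iterate (by continuity) n).norm

lemma mk_eq (c1 c2 : ℂ) : BC.mk c1 c2 = (c1 - c2 * Complex.I, c1 + c2 * Complex.I) := by
  simp only [BC.mk, BC.toBC, BC.i2, Prod.ext_iff, Prod.fst_add, Prod.snd_add, Prod.fst_mul,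
    Prod.snd_mul]
  exact ⟨by ring, trivial⟩

/-- `J_{2,c} = (J_{c₁-c₂·i₁} ×ₑ K_{c₁+c₂·i₁}) ∪ (K_{c₁-c₂·i₁} ×ₑ J_{c₁+c₂·i₁})`,
and `J_{c₁-c₂·i₁} ×ₑ J_{c₁+c₂·i₁} ⊆ J_{2,c}`. -/
theorem stmt13 (c1 c2 : ℂ) :
    frontier (K2 (BC.mk c1 c2)) =
      BC.cartE (frontier (Kc (c1 - c2 * Complex.I))) (Kc (c1 + c2 * Complex.I)) ∪
      BC.cartE (Kc (c1 - c2 * Complex.I)) (frontier (Kc (c1 + c2 * Complex.I))) ∧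
    BC.cartE (frontier (Kc (c1 - c2 * Complex.I))) (frontier (Kc (c1 + c2 * Complex.I))) ⊆
      frontier (K2 (BC.mk c1 c2)) := by
  have hmk := mk_eq c1 c2
  set a1 := c1 - c2 * Complex.I
  set a2 := c1 + c2 * Complex.I
  have hK : K2 (BC.mk c1 c2) = Kc a1 ×ˢ Kc a2 := by rw [hmk, K2_eq]
  have hc1 := Kc_closed a1
  have hc2 := Kc_closed a2
  have hfr : frontier (K2 (BC.mk c1 c2)) =
      frontier (Kc a1) ×ˢ Kc a2 ∪ Kc a1 ×ˢ frontier (Kc a2) := by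
    rw [hK, frontier_prod_eq, hc1.closure_eq, hc2.closure_eq, Set.union_comm]
  constructor
  · rw [hfr, cartE_eq, cartE_eq]
  · rw [hfr, cartE_eq]
    intro w hw
    rw [Set.mem_prod] at hw
    exact Or.inl ⟨hw.1, hc2.frontier_subset hw.2⟩
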